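/- arXiv:1709.04143 — 7 statements merged into one kernel-verified Lean document; each statement's English description precedes it below -/
import Mathlib

section
/- Let β be an algebraic number with minimal polynomial m(x) = a_d x^d + ... + a_1 x + a_0 ∈ ℤ[x], and let n be a positive integer. If gcd(a_d, n) = 1 and gcd(a_0, n) = 1, then there exists a positive integer i such that β^i - 1 ∈ nℤ[β]. -/
/-- `m` is the (primitive) minimal polynomial of `β` over `ℤ`. -/
def IsMinPolyZ (β : ℂ) (m : Polynomial ℤ) : Prop :=
  m ≠ 0 ∧ m.IsPrimitive ∧ 0 < m.leadingCoeff ∧ Polynomial.aeval β m = 0 ∧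
    ∀ q : Polynomial ℤ, q ≠ 0 → Polynomial.aeval β q = 0 → m.natDegree ≤ q.natDegree

set_option maxHeartbeats 1000000 in
theorem stmt_0 (β : ℂ) (m : Polynomial ℤ) (hm : IsMinPolyZ β m) (n : ℕ) (hn : 0 < n)
    (hlead : Int.gcd m.leadingCoeff n = 1) (hconst : Int.gcd (m.coeff 0) n = 1) :
    ∃ i : ℕ, 0 < i ∧ ∃ z ∈ Algebra.adjoin ℤ {β}, β ^ i - 1 = (n : ℂ) * z := by
  obtain ⟨hm0, -, -, hroot, -⟩ := hm
  classical
  set d := m.natDegree with hd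
  have hd1 : 1 ≤ d := by
    rcases Nat.eq_zero_or_pos d with h | h
    · exfalso
      have hmC : m = Polynomial.C (m.coeff 0) := Polynomial.eq_C_of_natDegree_eq_zero h
      rw [hmC, Polynomial.aeval_C] at hroot
      simp only [eq_intCast] at hroot
      have h0 : m.coeff 0 = 0 := by exact_mod_cast hroot
      exact hm0 (by rw [hmC, h0, map_zero])
    · exact h
  set I : Ideal (Polynomial ℤ) := Ideal.span {Polynomial.C (n:ℤ), m} with hI
  set π := Ideal.Quotient.mkₐ ℤ I with hπ
  set B := Polynomial ℤ ⧸ I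
  set x : B := π Polynomial.X with hx
  have hmem : ∀ p : Polynomial ℤ, p ∈ I ↔ ∃ a b, a * Polynomial.C (n:ℤ) + b * m = p := by
    intro p; rw [hI]; exact Ideal.mem_span_pair
  have hnB : ((n:ℤ) : B) = 0 := by
    have h1 : Polynomial.C (n:ℤ) ∈ I := Ideal.subset_span (by simp)
    have := (Ideal.Quotient.eq_zero_iff_mem).mpr h1
    simpa using this
  have hnB' : ((n:ℕ) : B) = 0 := by exact_mod_cast hnB
  have hmB : π m = 0 := (Ideal.Quotient.eq_zero_iff_mem).mpr (Ideal.subset_span (by simp))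
  have hsurj : Function.Surjective π := Ideal.Quotient.mk_surjective
  have haeval : Polynomial.aeval x m = 0 := by
    rw [hx, Polynomial.aeval_algHom_apply]
    simpa using hmB
  -- coprimality data
  obtain ⟨u, v, huv⟩ : IsCoprime m.leadingCoeff (n:ℤ) := Int.isCoprime_iff_gcd_eq_one.mpr hlead
  obtain ⟨s, t, hst⟩ : IsCoprime (m.coeff 0) (n:ℤ) := Int.isCoprime_iff_gcd_eq_one.mpr hconst
  have hlc : m.leadingCoeff = m.coeff d := rfl
  have huad : ((u * m.coeff d : ℤ) : B) = 1 := by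
    have h1 : (u * m.coeff d : ℤ) = 1 - v * n := by rw [← hlc]; linarith [huv]
    rw [h1]
    push_cast
    simp [hnB, hnB', show ((v * n : ℤ) : B) = (v:B) * ((n:ℤ):B) from Int.cast_mul (α := Polynomial ℤ ⧸ I) v n]
  have ha0 : ((s * m.coeff 0 : ℤ) : B) = 1 := by
    have h1 : (s * m.coeff 0 : ℤ) = 1 - t * n := by linarith [hst]
    rw [h1]; push_cast; simp [hnB, hnB', show ((t * n : ℤ) : B) = (t:B) * ((n:ℤ):B) from Int.cast_mul (α := Polynomial ℤ ⧸ I) t n]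
  -- x is integral over ℤ
  set p : Polynomial ℤ := Polynomial.X ^ d +
      ∑ i ∈ Finset.range d, Polynomial.C (u * m.coeff i) * Polynomial.X ^ i with hp
  have hmonic : p.Monic := by
    apply Polynomial.monic_X_pow_add
    refine lt_of_le_of_lt (Polynomial.degree_sum_le _ _) ?_
    rw [Finset.sup_lt_iff (by exact_mod_cast WithBot.bot_lt_coe d)]
    intro i hi
    refine lt_of_le_of_lt (Polynomial.degree_C_mul_X_pow_le _ _) ?_
    exact_mod_cast Finset.mem_range.mp hi
  have hrootp : Polynomial.aeval x p = 0 := by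
    have h1 := haeval
    rw [Polynomial.aeval_eq_sum_range, ← hd, Finset.sum_range_succ] at h1
    have h2 : (u:B) * ((∑ i ∈ Finset.range d, m.coeff i • x ^ i) + m.coeff d • x ^ d) = 0 := by
      rw [h1, mul_zero]
    rw [mul_add, Finset.mul_sum] at h2
    simp only [zsmul_eq_mul, ← mul_assoc, ← Int.cast_mul] at h2
    rw [huad, one_mul] at h2
    rw [hp]
    simp only [map_add, map_pow, map_sum, map_mul, Polynomial.aeval_X, Polynomial.aeval_C]
    simp only [algebraMap_int_eq, eq_intCast]
    push_cast at h2 ⊢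
    linear_combination h2
  have hint : IsIntegral ℤ x := ⟨p, hmonic, by rw [← Polynomial.aeval_def]; exact hrootp⟩
  -- B is generated by x
  have hadj : Algebra.adjoin ℤ ({x} : Set B) = ⊤ := by
    have h1 : Algebra.adjoin ℤ ({Polynomial.X} : Set (Polynomial ℤ)) = ⊤ := Polynomial.adjoin_X
    have h2 : (Algebra.adjoin ℤ ({Polynomial.X} : Set (Polynomial ℤ))).map π
        = Algebra.adjoin ℤ ({x} : Set B) := by
      rw [AlgHom.map_adjoin, Set.image_singleton, hx]
    rw [h1, Algebra.map_top] at h2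
    rw [← h2, AlgHom.range_eq_top]
    exact hsurj
  haveI : Module.Finite ℤ B := by
    have hfg := hint.fg_adjoin_singleton
    rw [hadj] at hfg
    exact ⟨by rwa [Algebra.top_toSubmodule] at hfg⟩
  -- B is finite
  haveI : NeZero n := ⟨hn.ne'⟩
  haveI := ringChar.charP B
  have hdvd : ringChar B ∣ n := ringChar.dvd hnB'
  letI : Algebra (ZMod n) B := (ZMod.castHom hdvd B).toAlgebra
  letI : IsScalarTower ℤ (ZMod n) B := IsScalarTower.of_algebraMap_eq fun c => by
    rw [RingHom.algebraMap_toAlgebra]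
    simp [map_intCast]
  haveI : Module.Finite (ZMod n) B := Module.Finite.of_restrictScalars_finite ℤ (ZMod n) B
  haveI : Finite B := Module.finite_of_finite (ZMod n)
  -- x is a unit
  have hdiv : m.divX * Polynomial.X + Polynomial.C (m.coeff 0) = m := m.divX_mul_X_add
  have heq1 : π m.divX * x + ((m.coeff 0 : ℤ) : B) = 0 := by
    have h3 := congrArg π hdiv
    rw [map_add, map_mul, hmB] at h3
    have h4 : π (Polynomial.C (m.coeff 0)) = ((m.coeff 0 : ℤ) : B) := by
      have : (Polynomial.C (m.coeff 0) : Polynomial ℤ) = algebraMap ℤ (Polynomial ℤ) (m.coeff 0) := by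
        simp [algebraMap_int_eq]
      rw [this, AlgHom.commutes]; exact eq_intCast _ _
    rw [h4] at h3
    rw [hx]
    exact h3
  have hxunit : IsUnit x := by
    apply IsUnit.of_mul_eq_one (a := x) (π m.divX * (-(s : B)))
    push_cast at ha0
    rw [show ((s * m.coeff 0 : ℤ) : B) = (s:B) * ((m.coeff 0 : ℤ) : B) from Int.cast_mul (α := Polynomial ℤ ⧸ I) s (m.coeff 0)] at ha0
    linear_combination (-(s:B)) * heq1 + ha0
  obtain ⟨w, hw⟩ := hxunit
  haveI : Finite Bˣ := inferInstance
  have hi : 0 < orderOf w := orderOf_pos w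
  have hxi : x ^ orderOf w = 1 := by
    rw [← hw, ← Units.val_pow_eq_pow_val, pow_orderOf_eq_one, Units.val_one]
  -- conclude
  have hmemI : Polynomial.X ^ orderOf w - 1 ∈ I := by
    rw [← Ideal.Quotient.eq_zero_iff_mem]
    have : π (Polynomial.X ^ orderOf w - 1) = 0 := by
      rw [map_sub, map_pow, map_one, ← hx, hxi, sub_self]
    exact this
  obtain ⟨a, b, hab⟩ := (hmem _).mp hmemI
  refine ⟨orderOf w, hi, Polynomial.aeval β a, ?_, ?_⟩
  · rw [Algebra.adjoin_singleton_eq_range_aeval]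
    exact ⟨a, rfl⟩
  · have := congrArg (Polynomial.aeval β) hab
    rw [map_add, map_mul, map_mul, hroot, mul_zero, add_zero, map_sub, map_pow,
      Polynomial.aeval_X, map_one, Polynomial.aeval_C] at this
    simp only [eq_intCast, Int.cast_natCast] at this
    linear_combination this.symm
end

section
/- Let β be an algebraic number of degree d. Then for every positive integer n there exist integers i > j such that β^i - β^j ∈ nℤ[β]. -/
open Polynomial

theorem stmt_1 (β : ℂ) (hβ : IsAlgebraic ℚ β) (n : ℕ) (hn : 0 < n) :
    ∃ i j : ℤ, j < i ∧ ∃ z ∈ Algebra.adjoin ℤ {β}, β ^ i - β ^ j = (n : ℂ) * z := by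
  have hint : IsAlgebraic ℤ β := (IsFractionRing.isAlgebraic_iff ℤ ℚ ℂ).mpr hβ
  obtain ⟨f₀, hf₀, hf₀β⟩ := hint
  set f := f₀.primPart with hfdef
  have hfprim : f.IsPrimitive := f₀.isPrimitive_primPart
  have hfβ : aeval β f = 0 := by
    have h1 : aeval β f₀ = 0 := hf₀β
    have h2 : f₀ = C f₀.content * f₀.primPart := f₀.eq_C_content_mul_primPart
    rw [h2, map_mul, aeval_C] at h1
    have hc : (algebraMap ℤ ℂ) f₀.content ≠ 0 := by
      simp only [algebraMap_int_eq, eq_intCast, ne_eq, Int.cast_eq_zero]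
      rw [content_eq_zero_iff]
      exact hf₀
    exact (mul_eq_zero.mp h1).resolve_left hc
  -- key finiteness lemma
  have key : ∀ m : ℕ, m ≠ 0 → ∃ (κ : Type) (_ : Fintype κ) (rep : ℤ[X] → κ) (val : κ → ℂ),
      ∀ g : ℤ[X], ∃ z ∈ Algebra.adjoin ℤ {β}, aeval β g - val (rep g) = (m : ℂ) * z := by
    intro m
    induction m using Nat.recOnMul with
    | zero => exact fun h => absurd rfl h
    | one =>
      intro _
      refine ⟨Unit, inferInstance, fun _ => (), fun _ => 0, fun g => ?_⟩
      exact ⟨aeval β g, aeval_mem_adjoin_singleton ℤ β, by simp⟩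
    | prime p hp' =>
      intro _
      haveI : Fact p.Prime := ⟨hp'⟩
      set φ := Int.castRingHom (ZMod p) with hφ
      set fb := f.map φ with hfb
      have hfb0 : fb ≠ 0 := by
        intro h
        have hdvd : (C (p : ℤ)) ∣ f := by
          rw [C_dvd_iff_dvd_coeff]
          intro i
          have h2 : fb.coeff i = 0 := by rw [h]; simp
          rw [hfb, coeff_map] at h2
          exact_mod_cast (ZMod.intCast_zmod_eq_zero_iff_dvd _ _).mp h2
        have := hfprim _ hdvd
        exact (Int.prime_iff_natAbs_prime.mpr (by simpa using hp')).not_unit this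
      set m0 := fb * C fb.leadingCoeff⁻¹ with hm0
      have hm : m0.Monic := monic_mul_leadingCoeff_inv hfb0
      set N := m0.natDegree + 1 with hN
      refine ⟨Fin N → ZMod p, inferInstance,
        fun g => fun i => ((g.map φ) %ₘ m0).coeff i,
        fun c => ∑ i : Fin N, (((c i).val : ℤ) : ℂ) * β ^ (i : ℕ), fun g => ?_⟩
      set r := (g.map φ) %ₘ m0 with hr
      have hdeg : r.natDegree < N := by
        have := degree_modByMonic_lt (g.map φ) hm
        exact Nat.lt_succ_of_le (natDegree_le_natDegree this.le)
      set Rg : ℤ[X] := ∑ i ∈ Finset.range N, monomial i (((r.coeff i).val : ℤ)) with hRg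
      have hmapR : Rg.map φ = r := by
        conv_rhs => rw [r.as_sum_range' N hdeg]
        rw [hRg, Polynomial.map_sum]
        refine Finset.sum_congr rfl fun i _ => ?_
        rw [map_monomial]
        congr 1
        simp [ZMod.natCast_val, ZMod.cast_id]
      -- division identity
      obtain ⟨Q, hQ⟩ := Polynomial.map_surjective φ ZMod.intCast_surjective
        (C fb.leadingCoeff⁻¹ * ((g.map φ) /ₘ m0))
      have hmap0 : (g - f * Q - Rg).map φ = 0 := by
        have hdiv : r + m0 * ((g.map φ) /ₘ m0) = g.map φ := modByMonic_add_div (g.map φ) m0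
        rw [Polynomial.map_sub, Polynomial.map_sub, Polynomial.map_mul, hQ, hmapR, ← hfb]
        linear_combination -hdiv
      have hdvd : C (p : ℤ) ∣ (g - f * Q - Rg) := by
        rw [C_dvd_iff_dvd_coeff]
        intro i
        have h2 : ((g - f * Q - Rg).map φ).coeff i = 0 := by rw [hmap0]; simp
        rw [coeff_map] at h2
        exact_mod_cast (ZMod.intCast_zmod_eq_zero_iff_dvd _ _).mp h2
      obtain ⟨k, hk⟩ := hdvd
      refine ⟨aeval β k, aeval_mem_adjoin_singleton ℤ β, ?_⟩
      have heval : aeval β g - aeval β Rg = (p : ℂ) * aeval β k := by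
        have := congrArg (aeval β) hk
        rw [map_sub, map_sub, map_mul, hfβ, zero_mul, map_mul, aeval_C] at this
        simpa using this
      have hval : (∑ i : Fin N, (((r.coeff i).val : ℤ) : ℂ) * β ^ (i : ℕ)) = aeval β Rg := by
        rw [hRg, map_sum, Fin.sum_univ_eq_sum_range fun i => (((r.coeff i).val : ℤ) : ℂ) * β ^ i]
        refine Finset.sum_congr rfl fun i _ => ?_
        rw [aeval_monomial]
        simp
      beta_reduce
      rw [← hr, hval]
      exact heval

    | mul a b ha hb =>
      intro hab
      obtain ⟨κ₁, _, rep₁, val₁, h₁⟩ := ha (by rintro rfl; exact hab (by simp))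
      obtain ⟨κ₂, _, rep₂, val₂, h₂⟩ := hb (by rintro rfl; exact hab (by simp))
      have hg : ∀ g : ℤ[X], ∃ g' : ℤ[X],
          aeval β g - val₁ (rep₁ g) = (a : ℂ) * aeval β g' := by
        intro g
        obtain ⟨z, hz, he⟩ := h₁ g
        rw [Algebra.adjoin_singleton_eq_range_aeval] at hz
        obtain ⟨g', hg'⟩ := hz
        exact ⟨g', by rw [he, ← hg']; rfl⟩
      choose G hG using hg
      refine ⟨κ₁ × κ₂, inferInstance, fun g => (rep₁ g, rep₂ (G g)),
        fun c => val₁ c.1 + (a : ℂ) * val₂ c.2, fun g => ?_⟩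
      obtain ⟨z₂, hz₂, he₂⟩ := h₂ (G g)
      refine ⟨z₂, hz₂, ?_⟩
      have h3 := hG g
      push_cast
      calc aeval β g - (val₁ (rep₁ g) + (a:ℂ) * val₂ (rep₂ (G g)))
          = (aeval β g - val₁ (rep₁ g)) - (a:ℂ) * val₂ (rep₂ (G g)) := by ring
        _ = (a:ℂ) * (aeval β (G g) - val₂ (rep₂ (G g))) := by rw [h3]; ring
        _ = (a:ℂ) * ((b:ℂ) * z₂) := by rw [he₂]
        _ = (a:ℂ) * (b:ℂ) * z₂ := by ring
  -- pigeonhole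
  obtain ⟨κ, _, rep, val, hrep⟩ := key n hn.ne'
  have : ∃ k k' : ℕ, k ≠ k' ∧ rep (X ^ k) = rep (X ^ k') :=
    Finite.exists_ne_map_eq_of_infinite fun k : ℕ => rep (X ^ k)
  obtain ⟨k, k', hne, heq⟩ := this
  -- wlog k' < k
  have main : ∀ k k' : ℕ, k' < k → rep (X ^ k) = rep (X ^ k') →
      ∃ i j : ℤ, j < i ∧ ∃ z ∈ Algebra.adjoin ℤ {β}, β ^ i - β ^ j = (n : ℂ) * z := by
    intro k k' hlt heq
    obtain ⟨z₁, hz₁, he₁⟩ := hrep (X ^ k)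
    obtain ⟨z₂, hz₂, he₂⟩ := hrep (X ^ k')
    refine ⟨(k : ℤ), (k' : ℤ), by exact_mod_cast hlt,
      z₁ - z₂, Subalgebra.sub_mem _ hz₁ hz₂, ?_⟩
    rw [aeval_X_pow] at he₁ he₂
    rw [zpow_natCast, zpow_natCast]
    have : β ^ k - β ^ k' = (β ^ k - val (rep (X ^ k))) - (β ^ k' - val (rep (X ^ k'))) := by
      rw [heq]; ring
    rw [this, he₁, he₂]; ring
  rcases lt_or_gt_of_ne hne with h | h
  · exact main k' k h heq.symm
  · exact main k k' h heq
end

section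
/- Let β be a complex number with |β| > 1, let n be a positive integer, and suppose 1/n = Σ_{k ≥ -L} a_k β^{-k} where the digit sequence (a_k) is eventually periodic with values in ℤ[β]. Then there exist integers i > j such that β^i - β^j ∈ nℤ[β]. -/
set_option maxHeartbeats 1000000


theorem stmt_7 (β : ℂ) (hβ : 1 < ‖β‖) (n : ℕ) (hn : 0 < n)
    (L : ℤ) (a : ℤ → ℂ) (ha : ∀ k, a k ∈ Algebra.adjoin ℤ {β})
    (hzero : ∀ k : ℤ, k < -L → a k = 0)
    (hper : ∃ (N : ℤ) (p : ℕ), 0 < p ∧ ∀ k : ℤ, N ≤ k → a (k + p) = a k)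
    (hsum : (1 : ℂ) / n = ∑' k : ℤ, a k * β ^ (-k)) :
    ∃ i j : ℤ, j < i ∧ ∃ z ∈ Algebra.adjoin ℤ {β}, β ^ i - β ^ j = (n : ℂ) * z := by
  obtain ⟨N, p, hp, hperiod⟩ := hper
  have hβ0 : β ≠ 0 := by
    intro h
    rw [h] at hβ
    simp at hβ
    linarith
  have hn0 : (n : ℂ) ≠ 0 := Nat.cast_ne_zero.2 hn.ne'
  set f : ℤ → ℂ := fun k => a k * β ^ (-k) with hfdef
  have hf : Summable f := by
    by_contra h
    rw [tsum_eq_zero_of_not_summable h] at hsum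
    exact one_div_ne_zero hn0 hsum
  have hshift : Summable (fun k : ℤ => f (k + p)) :=
    hf.comp_injective (add_left_injective (p : ℤ))
  have hgk : ∀ k : ℤ, a (k + p) * β ^ (-k) = β ^ (p : ℤ) * f (k + p) := by
    intro k
    show a (k + p) * β ^ (-k) = β ^ (p : ℤ) * (a (k + p) * β ^ (-(k + (p : ℤ))))
    rw [mul_left_comm, ← zpow_add₀ hβ0]
    congr 2
    ring
  have hg : Summable (fun k : ℤ => a (k + p) * β ^ (-k)) := by
    have heq : (fun k : ℤ => a (k + p) * β ^ (-k)) = fun k => β ^ (p : ℤ) * f (k + p) := by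
      funext k; exact hgk k
    rw [heq]
    exact hshift.mul_left _
  have htg : ∑' k : ℤ, a (k + p) * β ^ (-k) = β ^ (p : ℤ) * (1 / n) := by
    calc ∑' k : ℤ, a (k + p) * β ^ (-k) = ∑' k : ℤ, β ^ (p : ℤ) * f (k + p) := tsum_congr hgk
      _ = β ^ (p : ℤ) * ∑' k : ℤ, f (k + p) := tsum_mul_left
      _ = β ^ (p : ℤ) * ∑' k : ℤ, f k := by
          congr 1
          exact (Equiv.addRight (p : ℤ)).tsum_eq f
      _ = β ^ (p : ℤ) * (1 / n) := by rw [← hsum]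
  obtain ⟨s, hsdef⟩ : ∃ s : Finset ℤ, s = Finset.Icc (-L - (p : ℤ)) N := ⟨_, rfl⟩
  have hsupp : ∀ k ∉ s, a (k + p) * β ^ (-k) - f k = 0 := by
    intro k hk
    rw [hsdef] at hk
    simp only [Finset.mem_Icc, not_and, not_le] at hk
    rcases le_or_gt (-L - (p : ℤ)) k with h1 | h1
    · have h2 := hperiod k (le_of_lt (hk h1))
      simp [hfdef, h2]
    · have h2 : k < -L := by
        have : (0 : ℤ) ≤ p := Int.natCast_nonneg p
        linarith
      have h3 : k + p < -L := by linarith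
      simp [hfdef, hzero _ h2, hzero _ h3]
  have hfin : ∑' k : ℤ, (a (k + p) * β ^ (-k) - f k)
      = ∑ k ∈ s, (a (k + p) - a k) * β ^ (-k) := by
    rw [tsum_eq_sum hsupp]
    apply Finset.sum_congr rfl
    intro k _
    simp only [hfdef]
    ring
  have hkey : β ^ (p : ℤ) * (1 / n) - 1 / n = ∑ k ∈ s, (a (k + p) - a k) * β ^ (-k) := by
    rw [← hfin, Summable.tsum_sub hg hf, htg, ← hsum]
  refine ⟨N + (p : ℤ), N, lt_add_of_pos_right N (by exact_mod_cast hp),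
    ∑ k ∈ s, (a (k + p) - a k) * β ^ (N - k), ?_, ?_⟩
  · apply Subalgebra.sum_mem
    intro k hk
    rw [hsdef] at hk
    have hk' : k ≤ N := (Finset.mem_Icc.1 hk).2
    have hpow : β ^ (N - k) = β ^ (N - k).toNat := by
      rw [← zpow_natCast, Int.toNat_of_nonneg (by omega)]
    exact mul_mem (sub_mem (ha _) (ha _))
      (by rw [hpow]; exact pow_mem (Algebra.self_mem_adjoin_singleton ℤ β) _)
  · calc β ^ (N + (p : ℤ)) - β ^ N
        = (n : ℂ) * β ^ N * (β ^ (p : ℤ) * (1 / n) - 1 / n) := by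
          rw [zpow_add₀ hβ0]
          field_simp
      _ = (n : ℂ) * β ^ N * ∑ k ∈ s, (a (k + p) - a k) * β ^ (-k) := by rw [hkey]
      _ = (n : ℂ) * ∑ k ∈ s, (a (k + p) - a k) * β ^ (N - k) := by
          rw [mul_assoc, Finset.mul_sum]
          congr 1
          apply Finset.sum_congr rfl
          intro k _
          rw [show β ^ (N - k) = β ^ N * β ^ (-k) by rw [← zpow_add₀ hβ0]; congr 1]
          ring
end

section
/- Let β be an algebraic number with minimal polynomial m(x) over ℤ of degree d, and let M be the maximum absolute value of the coefficients of m. Then for every positive integer n there exist integers i > j and integers d_0, ..., d_m with |d_k| < M(d+1) for all k, and m < 2(i - j), such that β^i - β^j = n·Σ_{k=0}^m d_k β^k. -/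
section Aux
open Polynomial


/-- Split `f = H + p*G` with `p ∤ leadingCoeff H`, given some coefficient of `f`
is not divisible by `p`. -/
lemma split_lemma (p : ℤ) (f : Polynomial ℤ) (hf : ∃ e, ¬ p ∣ f.coeff e) :
    ∃ H G : Polynomial ℤ, f = H + C p * G ∧ ¬ p ∣ H.leadingCoeff := by
  obtain ⟨e, he⟩ := hf
  suffices h : ∀ (D : ℕ) (f : Polynomial ℤ) (e : ℕ), f.natDegree ≤ D → ¬ p ∣ f.coeff e →
      ∃ H G : Polynomial ℤ, f = H + C p * G ∧ ¬ p ∣ H.leadingCoeff from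
    h f.natDegree f e le_rfl he
  intro D
  induction D with
  | zero =>
    intro f e hD he
    refine ⟨f, 0, by ring, ?_⟩
    have h0 : f.natDegree = 0 := Nat.le_zero.mp hD
    have he0 : e = 0 := by
      by_contra h
      exact he (by rw [f.coeff_eq_zero_of_natDegree_lt (by omega)]; exact dvd_zero p)
    rwa [leadingCoeff, h0, ← he0]
  | succ D ih =>
    intro f e hD he
    by_cases hc : p ∣ f.leadingCoeff
    · have hfne : f ≠ 0 := by
        rintro rfl; exact he (dvd_zero p)
      have heD : e ≠ f.natDegree := by
        rintro rfl; exact he hc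
      have heltD : e < f.natDegree := by
        rcases lt_or_gt_of_ne heD with h | h
        · exact h
        · exact absurd (f.coeff_eq_zero_of_natDegree_lt h) (fun h0 => he (h0 ▸ dvd_zero p))
      set f₁ := f.eraseLead with hf₁
      have hcoe : f₁.coeff e = f.coeff e := f.eraseLead_coeff_of_ne e heD
      have hf₁ne : f₁ ≠ 0 := by
        intro h0
        apply he
        rw [← hcoe, h0, coeff_zero]
        exact dvd_zero p
      have hdlt : f₁.natDegree < f.natDegree :=
        lt_of_le_of_lt f.eraseLead_natDegree_le (by omega)
      obtain ⟨H, G, hHG, hH⟩ := ih f₁ e (by omega) (by rw [hcoe]; exact he)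
      obtain ⟨c', hc'⟩ := hc
      obtain ⟨N, cN, hNdef, heq⟩ : ∃ N cN, cN = p * c' ∧ f = f₁ + C cN * X ^ N :=
        ⟨f.natDegree, f.leadingCoeff, hc', by conv_lhs => rw [← f.eraseLead_add_C_mul_X_pow]⟩
      refine ⟨H, G + C c' * X ^ N, ?_, hH⟩
      rw [heq, hHG, hNdef, C_mul]
      ring
    · exact ⟨f, 0, by ring, hc⟩

/-- Monic polynomial in the ideal `(f, p^a)` for `p` prime. -/
lemma monic_primepow (p : ℕ) (hp : p.Prime) (a : ℕ) (f : Polynomial ℤ)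
    (hf : ∃ e, ¬ (p : ℤ) ∣ f.coeff e) :
    ∃ F A B : Polynomial ℤ, F.Monic ∧ F = A * f + C ((p : ℤ) ^ a) * B := by
  obtain ⟨H, G, hHG, hH⟩ := split_lemma (p : ℤ) f hf
  -- f ∣ H^a - (-(C p * G))^a
  have hdvd : f ∣ H ^ a - (-(C (p:ℤ) * G)) ^ a := by
    have h2 : H - (-(C (p:ℤ) * G)) = f := by rw [hHG]; ring
    exact h2 ▸ sub_dvd_pow_sub_pow H (-(C (p:ℤ) * G)) a
  obtain ⟨A₀, hA₀⟩ := hdvd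
  -- so H^a = A₀ * f + C(p^a) * ((-1)^a * G^a)
  have hHa : H ^ a = A₀ * f + C ((p:ℤ)^a) * (C ((-1:ℤ))^a * G ^ a) := by
    simp only [C_pow, C_neg, C_1]
    linear_combination hA₀
  -- leading coefficient of H^a is coprime to p^a
  have hcop : IsCoprime (H.leadingCoeff ^ a) ((p : ℤ) ^ a) := by
    refine IsCoprime.pow ?_
    exact ((Nat.prime_iff_prime_int.mp hp).coprime_iff_not_dvd.mpr hH).symm
  obtain ⟨u, v, huv⟩ := hcop
  set N := (H ^ a).natDegree with hN
  refine ⟨C u * H ^ a + C (v * (p:ℤ)^a) * X ^ N, C u * A₀, C v * X ^ N + C u * (C ((-1:ℤ))^a * G ^ a), ?_, ?_⟩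
  · -- monic
    apply monic_of_natDegree_le_of_coeff_eq_one N
    · refine natDegree_add_le_of_degree_le ?_ ?_
      · exact (natDegree_C_mul_le _ _)
      · exact (natDegree_C_mul_le _ _).trans (by simp)
    · have hHne : H ≠ 0 := fun h0 => hH (by simp [h0])
      have hlc : (H ^ a).coeff N = H.leadingCoeff ^ a := by
        rw [hN, ← leadingCoeff, leadingCoeff_pow]
      rw [coeff_add, coeff_C_mul, coeff_C_mul, hlc, coeff_X_pow, if_pos rfl, mul_one]
      linarith [huv]
  · rw [hHa]
    rw [C_mul]
    ring

/-- Monic polynomial in the ideal `(f, n)`. -/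
lemma monic_in_ideal (f : Polynomial ℤ)
    (hf : ∀ p : ℕ, p.Prime → ∃ e, ¬ (p : ℤ) ∣ f.coeff e) :
    ∀ n : ℕ, 0 < n → ∃ F A B : Polynomial ℤ, F.Monic ∧ F = A * f + C (n : ℤ) * B := by
  intro n
  induction n using Nat.strong_induction_on with
  | _ n ih =>
    intro hn
    rcases eq_or_lt_of_le (show 1 ≤ n from hn) with h1 | h2
    · exact ⟨1, 0, 1, monic_one, by rw [← h1]; simp⟩
    · -- n ≥ 2
      set p := n.minFac with hpdef
      have hp : p.Prime := n.minFac_prime (by omega)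
      have hpn : p ∣ n := n.minFac_dvd
      set a := n.factorization p with ha
      set n' := ordCompl[p] n with hn'
      have hsplit : p ^ a * n' = n := Nat.ordProj_mul_ordCompl_eq_self n p
      have hapos : 0 < a := Nat.Prime.factorization_pos_of_dvd hp (by omega) hpn
      have hn'pos : 0 < n' := Nat.ordCompl_pos p (by omega)
      have hn'lt : n' < n := by
        have hp2 : 2 ≤ p ^ a := by
          calc 2 ≤ p := hp.two_le
          _ ≤ p ^ a := Nat.le_self_pow (by omega) p
        nlinarith
      obtain ⟨F₂, A₂, B₂, hF₂m, hF₂⟩ := ih n' hn'lt hn'pos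
      obtain ⟨F₁, A₁, B₁, hF₁m, hF₁⟩ := monic_primepow p hp a f (hf p hp)
      refine ⟨F₁ * F₂, A₁ * A₂ * f + A₁ * C (n' : ℤ) * B₂ + C ((p:ℤ)^a) * B₁ * A₂,
        B₁ * B₂, hF₁m.mul hF₂m, ?_⟩
      rw [hF₁, hF₂]
      have hc : C ((n : ℤ)) = C ((p:ℤ)^a) * C ((n' : ℤ)) := by
        rw [← C_mul]
        congr 1
        push_cast [← hsplit]
        ring
      rw [hc]
      ring

/-- Step 1: pigeonhole, there are `j0 < i0` with `X^i0 - X^j0 ∈ (m, n)`. -/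
lemma step1 (m : Polynomial ℤ) (hprim : m.IsPrimitive) (n : ℕ) (hn : 0 < n) :
    ∃ (j0 g : ℕ) (q₀ p₀ : Polynomial ℤ), 0 < g ∧
      (X : Polynomial ℤ) ^ (j0 + g) - X ^ j0 = q₀ * m + C (n : ℤ) * p₀ := by
  have hf : ∀ p : ℕ, p.Prime → ∃ e, ¬ (p : ℤ) ∣ m.coeff e := by
    intro p hp
    by_contra h
    push_neg at h
    have : Polynomial.C (p : ℤ) ∣ m := (C_dvd_iff_dvd_coeff _ _).mpr h
    have hu : IsUnit ((p : ℤ)) := hprim _ this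
    rcases Int.isUnit_iff.mp hu with h1 | h1 <;>
      · have := hp.two_le; omega
  obtain ⟨F, A, B, hFm, hFeq⟩ := monic_in_ideal m hf n hn
  haveI : NeZero n := ⟨hn.ne'⟩
  set D := F.natDegree with hD
  -- pigeonhole on remainders mod F with coefficients mod n
  obtain ⟨a, b, hab, hfab⟩ := Finite.exists_ne_map_eq_of_infinite
    (fun t : ℕ => fun k : Fin D => (((X : Polynomial ℤ) ^ t %ₘ F).coeff k : ZMod n))
  -- wlog b < a
  wlog hba : b < a generalizing a b
  · exact this b a hab.symm hfab.symm (by omega)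
  have hcd : ∀ k : ℕ, (n : ℤ) ∣ (((X : Polynomial ℤ) ^ a %ₘ F) - ((X:Polynomial ℤ) ^ b %ₘ F)).coeff k := by
    intro k
    rcases lt_or_ge k D with hk | hk
    · have := congrFun hfab ⟨k, hk⟩
      rw [Polynomial.coeff_sub]
      rw [← ZMod.intCast_zmod_eq_zero_iff_dvd]
      push_cast
      simp only [sub_eq_zero]
      exact this
    · have h1 : (((X : Polynomial ℤ) ^ a %ₘ F)).coeff k = 0 := by
        apply coeff_eq_zero_of_degree_lt
        exact lt_of_lt_of_le (degree_modByMonic_lt _ hFm)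
          ((degree_le_natDegree).trans (by exact_mod_cast Nat.cast_le.mpr hk))
      have h2 : (((X : Polynomial ℤ) ^ b %ₘ F)).coeff k = 0 := by
        apply coeff_eq_zero_of_degree_lt
        exact lt_of_lt_of_le (degree_modByMonic_lt _ hFm)
          ((degree_le_natDegree).trans (by exact_mod_cast Nat.cast_le.mpr hk))
      simp [h1, h2]
  obtain ⟨w, hw⟩ : Polynomial.C (n : ℤ) ∣
      (((X : Polynomial ℤ) ^ a %ₘ F) - ((X:Polynomial ℤ) ^ b %ₘ F)) :=
    (C_dvd_iff_dvd_coeff _ _).mpr hcd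
  set Q := (X : Polynomial ℤ) ^ a /ₘ F - (X : Polynomial ℤ) ^ b /ₘ F with hQ
  refine ⟨b, a - b, A * Q, B * Q + w, by omega, ?_⟩
  have hXa := modByMonic_add_div ((X : Polynomial ℤ) ^ a) F
  have hXb := modByMonic_add_div ((X : Polynomial ℤ) ^ b) F
  have hab' : b + (a - b) = a := by omega
  rw [hab']
  calc (X : Polynomial ℤ) ^ a - X ^ b
      = F * Q + (((X : Polynomial ℤ) ^ a %ₘ F) - ((X:Polynomial ℤ) ^ b %ₘ F)) := by
        linear_combination hXb - hXa
    _ = (A * Q) * m + C (n:ℤ) * (B * Q + w) := by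
        rw [hw, hFeq]; ring

lemma stmt_12_aux (β : ℂ) (m : Polynomial ℤ) (hm0 : m ≠ 0) (hprim : m.IsPrimitive)
    (hlc : 0 < m.leadingCoeff) (hroot : Polynomial.aeval β m = 0) (M : ℤ)
    (hM : M = (Finset.range (m.natDegree + 1)).sup' (by simp) fun i => |m.coeff i|)
    (n : ℕ) (hn : 0 < n) :
    ∃ (i j : ℤ) (mm : ℕ) (d : ℕ → ℤ), j < i ∧ (mm : ℤ) < 2 * (i - j) ∧
      (∀ k ≤ mm, |d k| < M * (m.natDegree + 1)) ∧
      β ^ i - β ^ j = (n : ℂ) * ∑ k ∈ Finset.range (mm + 1), (d k : ℂ) * β ^ k := by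
  have hd1 : 1 ≤ m.natDegree := by
    by_contra h
    have hd0 : m.natDegree = 0 := by omega
    have hmC : m = C (m.coeff 0) := eq_C_of_natDegree_eq_zero hd0
    rw [hmC] at hroot
    have h0 : m.coeff 0 = 0 := by
      have : ((m.coeff 0 : ℤ) : ℂ) = 0 := by simpa using hroot
      exact_mod_cast this
    exact hm0 (by rw [hmC, h0, map_zero])
  have habs : ∀ t, |m.coeff t| ≤ M := by
    intro t
    rcases le_or_gt t m.natDegree with h | h
    · exact hM ▸ Finset.le_sup' (fun i => |m.coeff i|) (Finset.mem_range.mpr (by omega))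
    · rw [coeff_eq_zero_of_natDegree_lt h, abs_zero]
      calc (0:ℤ) ≤ |m.coeff 0| := abs_nonneg _
        _ ≤ M := hM ▸ Finset.le_sup' (fun i => |m.coeff i|) (Finset.mem_range.mpr (by omega))
  have hM1 : 1 ≤ M := by
    have h1 : |m.leadingCoeff| ≤ M := habs m.natDegree
    have h2 : 0 < m.leadingCoeff := hlc
    rw [abs_of_pos h2] at h1
    omega
  obtain ⟨j0, g, q₀, p₀, hg, heq1⟩ := step1 m hprim n hn
  set d := m.natDegree with hd
  set k := j0 + q₀.natDegree + d + 1 with hk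
  set S : Polynomial ℤ := ∑ l ∈ Finset.range k, X ^ (l * g) with hS
  have htel : S * ((X : Polynomial ℤ) ^ (j0 + g) - X ^ j0) = X ^ (j0 + k * g) - X ^ j0 := by
    rw [hS, Finset.sum_mul]
    have h1 : ∀ l ∈ Finset.range k, (X : Polynomial ℤ) ^ (l * g) * (X ^ (j0 + g) - X ^ j0)
        = X ^ (j0 + (l + 1) * g) - X ^ (j0 + l * g) := by
      intro l _
      rw [mul_sub, ← pow_add, ← pow_add]
      congr 2 <;> ring
    rw [Finset.sum_congr rfl h1,
      Finset.sum_range_sub (fun l => (X : Polynomial ℤ) ^ (j0 + l * g))]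
    simp
  set I := j0 + k * g with hI
  have heq2 : (X : Polynomial ℤ) ^ I - X ^ j0 = (S * q₀) * m + C (n : ℤ) * (S * p₀) := by
    rw [← htel, heq1]; ring
  set q := S * q₀ with hq
  set q' : Polynomial ℤ := ∑ e ∈ Finset.range (q.natDegree + 1), C (q.coeff e % n) * X ^ e
    with hq'def
  have hq'coeff : ∀ t, q'.coeff t = q.coeff t % n := by
    intro t
    rw [hq'def, finset_sum_coeff]
    simp only [coeff_C_mul, coeff_X_pow, mul_ite, mul_one, mul_zero]
    rw [Finset.sum_ite_eq (Finset.range (q.natDegree + 1)) t (fun e => q.coeff e % n)]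
    split_ifs with h
    · rfl
    · rw [coeff_eq_zero_of_natDegree_lt (by simp only [Finset.mem_range] at h; omega)]
      simp
  have hq'deg : q'.natDegree ≤ q.natDegree := by
    refine natDegree_le_iff_coeff_eq_zero.mpr (fun N hN => ?_)
    rw [hq'coeff, coeff_eq_zero_of_natDegree_lt hN]
    simp
  obtain ⟨s, hs⟩ : C (n : ℤ) ∣ q - q' := by
    refine (C_dvd_iff_dvd_coeff _ _).mpr (fun t => ?_)
    rw [coeff_sub, hq'coeff]
    refine ⟨q.coeff t / n, ?_⟩
    have := Int.mul_ediv_add_emod (q.coeff t) (n : ℤ)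
    omega
  set p' := s * m + S * p₀ with hp'def
  have hkey : (X : Polynomial ℤ) ^ I - X ^ j0 = q' * m + C (n : ℤ) * p' := by
    rw [hp'def]
    linear_combination heq2 + m * hs
  have hcoeffkey : ∀ t, (n : ℤ) * p'.coeff t
      = ((X : Polynomial ℤ) ^ I - X ^ j0).coeff t - (q' * m).coeff t := by
    intro t
    have := congrArg (fun P => Polynomial.coeff P t) hkey
    simp only [coeff_add, coeff_C_mul] at this
    linarith [this]
  -- bound on coefficients of q' * m
  have hsumabs : ∀ T : ℕ, ∑ b ∈ Finset.range T, |m.coeff b| ≤ ((d : ℤ) + 1) * M := by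
    intro T
    have hsub : ∑ b ∈ Finset.range T, |m.coeff b|
        ≤ ∑ b ∈ Finset.range (max T (d + 1)), |m.coeff b| :=
      Finset.sum_le_sum_of_subset_of_nonneg
        (Finset.range_subset_range.mpr (le_max_left _ _)) (fun _ _ _ => abs_nonneg _)
    have heqs : ∑ b ∈ Finset.range (max T (d + 1)), |m.coeff b|
        = ∑ b ∈ Finset.range (d + 1), |m.coeff b| := by
      symm
      apply Finset.sum_subset (Finset.range_subset_range.mpr (le_max_right _ _))
      intro x _ hx
      simp only [Finset.mem_range, not_lt] at hx
      rw [coeff_eq_zero_of_natDegree_lt (by omega), abs_zero]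
    have hle : ∑ b ∈ Finset.range (d + 1), |m.coeff b| ≤ ∑ _b ∈ Finset.range (d + 1), M :=
      Finset.sum_le_sum (fun b _ => habs b)
    rw [Finset.sum_const, Finset.card_range, nsmul_eq_mul] at hle
    calc ∑ b ∈ Finset.range T, |m.coeff b| ≤ _ := hsub
      _ = _ := heqs
      _ ≤ ((d : ℤ) + 1) * M := by push_cast at hle ⊢; linarith
  have hn1 : (1 : ℤ) ≤ (n : ℤ) := by exact_mod_cast hn
  have hq'bound : ∀ t, 0 ≤ q'.coeff t ∧ q'.coeff t ≤ (n : ℤ) - 1 := by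
    intro t
    rw [hq'coeff]
    have h1 : 0 ≤ q.coeff t % n := Int.emod_nonneg _ (by exact_mod_cast hn.ne')
    have h2 : q.coeff t % n < n := Int.emod_lt_of_pos _ (by exact_mod_cast hn)
    omega
  have hmulbound : ∀ t, |(q' * m).coeff t| ≤ ((n : ℤ) - 1) * (((d : ℤ) + 1) * M) := by
    intro t
    rw [coeff_mul]
    calc |∑ x ∈ Finset.HasAntidiagonal.antidiagonal t, q'.coeff x.1 * m.coeff x.2|
        ≤ ∑ x ∈ Finset.HasAntidiagonal.antidiagonal t, |q'.coeff x.1 * m.coeff x.2| :=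
          Finset.abs_sum_le_sum_abs _ _
      _ ≤ ∑ x ∈ Finset.HasAntidiagonal.antidiagonal t, ((n : ℤ) - 1) * |m.coeff x.2| := by
          refine Finset.sum_le_sum (fun x _ => ?_)
          rw [abs_mul]
          refine mul_le_mul_of_nonneg_right ?_ (abs_nonneg _)
          obtain ⟨h1, h2⟩ := hq'bound x.1
          rw [abs_of_nonneg h1]
          exact h2
      _ = ((n : ℤ) - 1) * ∑ x ∈ Finset.HasAntidiagonal.antidiagonal t, |m.coeff x.2| := by
          rw [Finset.mul_sum]
      _ ≤ ((n : ℤ) - 1) * (((d : ℤ) + 1) * M) := by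
          refine mul_le_mul_of_nonneg_left ?_ (by omega)
          rw [Finset.Nat.sum_antidiagonal_eq_sum_range_succ_mk]
          have hrefl := Finset.sum_range_reflect (fun b => |m.coeff b|) (t + 1)
          simp only [Nat.add_sub_cancel] at hrefl
          calc ∑ x ∈ Finset.range (t + 1), |m.coeff (t - x)|
              = ∑ x ∈ Finset.range (t + 1), |m.coeff x| := by
                rw [← hrefl]
            _ ≤ ((d : ℤ) + 1) * M := hsumabs (t + 1)
  -- coefficient bound for p'
  have hd1' : (1 : ℤ) ≤ (d : ℤ) := by exact_mod_cast hd1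
  have hcb : ∀ t, |p'.coeff t| < M * ((d : ℤ) + 1) := by
    intro t
    have h1 : |((X : Polynomial ℤ) ^ I - X ^ j0).coeff t| ≤ 1 := by
      rw [coeff_sub, coeff_X_pow, coeff_X_pow]
      split_ifs <;> norm_num
    have h3 : (n : ℤ) * |p'.coeff t| < (n : ℤ) * (M * ((d : ℤ) + 1)) := by
      have hgap : (2 : ℤ) ≤ ((d : ℤ) + 1) * M := by nlinarith
      calc (n : ℤ) * |p'.coeff t| = |(n : ℤ) * p'.coeff t| := by
            rw [abs_mul, abs_of_nonneg (show (0:ℤ) ≤ (n:ℤ) by positivity)]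
        _ ≤ |((X : Polynomial ℤ) ^ I - X ^ j0).coeff t| + |(q' * m).coeff t| := by
            rw [hcoeffkey t]; exact abs_sub _ _
        _ ≤ 1 + ((n : ℤ) - 1) * (((d : ℤ) + 1) * M) := by
            have := hmulbound t
            linarith [h1]
        _ < (n : ℤ) * (M * ((d : ℤ) + 1)) := by nlinarith
    exact lt_of_mul_lt_mul_left h3 (by positivity)
  -- degree bound for p'
  have hkk : k ≤ k * g := Nat.le_mul_of_pos_right _ hg
  have hIlt : I < 2 * (k * g) := by
    rw [hI]
    have : j0 < k := by omega
    omega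
  have hqmdeg : (q' * m).natDegree < 2 * (k * g) := by
    have hSdeg : S.natDegree ≤ (k - 1) * g := by
      rw [hS]
      refine natDegree_sum_le_of_forall_le _ _ (fun l hl => ?_)
      simp only [Finset.mem_range] at hl
      rw [natDegree_X_pow]
      exact Nat.mul_le_mul_right g (by omega)
    have h4 : (q' * m).natDegree ≤ q'.natDegree + d := natDegree_mul_le
    have h5 : q.natDegree ≤ S.natDegree + q₀.natDegree := natDegree_mul_le
    have h6 : (k - 1) * g = k * g - g := by
      rw [Nat.sub_mul, one_mul]
    have h7 : g ≤ k * g := Nat.le_mul_of_pos_left _ (by omega)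
    omega
  have hdeg0 : ∀ t, 2 * (k * g) ≤ t → p'.coeff t = 0 := by
    intro t ht
    have h0 := hcoeffkey t
    rw [coeff_sub, coeff_X_pow, coeff_X_pow, if_neg (by omega), if_neg (by omega),
      coeff_eq_zero_of_natDegree_lt (lt_of_lt_of_le hqmdeg ht)] at h0
    simp only [sub_zero, sub_self, zero_sub, neg_zero] at h0
    have hnz : (n : ℤ) ≠ 0 := by exact_mod_cast hn.ne'
    exact (mul_eq_zero.mp h0).resolve_left hnz
  -- final assembly
  have hkg1 : 1 ≤ k * g := by omega
  refine ⟨(I : ℤ), (j0 : ℤ), 2 * (k * g) - 1, fun t => p'.coeff t, ?_, ?_, ?_, ?_⟩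
  · exact_mod_cast show j0 < I by rw [hI]; omega
  · have hcast : ((2 * (k * g) - 1 : ℕ) : ℤ) = 2 * ((k * g : ℕ) : ℤ) - 1 := by
      push_cast [Nat.cast_sub (by omega : 1 ≤ 2 * (k * g))]
      ring
    rw [hcast]
    have : ((I : ℕ) : ℤ) - ((j0 : ℕ) : ℤ) = ((k * g : ℕ) : ℤ) := by
      rw [hI]; push_cast; ring
    rw [this]
    have : (1 : ℤ) ≤ ((k * g : ℕ) : ℤ) := by exact_mod_cast hkg1
    linarith
  · intro t _
    calc |p'.coeff t| < M * ((d : ℤ) + 1) := hcb t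
      _ = M * ((m.natDegree : ℤ) + 1) := by rw [hd]
  · have hdeglt : p'.natDegree < 2 * (k * g) := by
      by_cases hp0 : p' = 0
      · rw [hp0, natDegree_zero]; omega
      · by_contra hcon
        push_neg at hcon
        exact hp0 (leadingCoeff_eq_zero.mp (hdeg0 _ hcon))
    have haev := congrArg (Polynomial.aeval β) hkey
    simp only [map_sub, map_add, map_mul, map_pow, aeval_X, aeval_C, hroot, mul_zero,
      zero_add, algebraMap_int_eq, eq_intCast, Int.cast_natCast, map_natCast] at haev
    have hsum' : Polynomial.aeval β p' = ∑ t ∈ Finset.range (2 * (k * g)), (p'.coeff t : ℂ) * β ^ t := by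
      rw [Polynomial.aeval_eq_sum_range' hdeglt]
      exact Finset.sum_congr rfl (fun t _ => by rw [zsmul_eq_mul])
    have hrange : 2 * (k * g) - 1 + 1 = 2 * (k * g) := Nat.sub_add_cancel (by omega)
    rw [hrange]
    rw [zpow_natCast, zpow_natCast]
    rw [haev, hsum']

end Aux


theorem stmt_12 (β : ℂ) (m : Polynomial ℤ) (hm : IsMinPolyZ β m) (M : ℤ)
    (hM : M = (Finset.range (m.natDegree + 1)).sup' (by simp) fun i => |m.coeff i|)
    (n : ℕ) (hn : 0 < n) :
    ∃ (i j : ℤ) (mm : ℕ) (d : ℕ → ℤ), j < i ∧ (mm : ℤ) < 2 * (i - j) ∧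
      (∀ k ≤ mm, |d k| < M * (m.natDegree + 1)) ∧
      β ^ i - β ^ j = (n : ℂ) * ∑ k ∈ Finset.range (mm + 1), (d k : ℂ) * β ^ k := by
  obtain ⟨hm0, hprim, hlc, hroot, hmin⟩ := hm
  exact stmt_12_aux β m hm0 hprim hlc hroot M hM n hn
end

section
/- Let β ∈ ℂ with |β| > 1 and suppose β^i - β^j = n·z where i > j ≥ 0 are integers, n a positive integer, and z = Σ_{k=0}^m d_k β^k with integers d_k satisfying |d_k| ≤ C and m < 2(i-j). Then 1/n = Σ_{k ≥ -L} a_k β^{-k} for some eventually periodic integer digit sequence (a_k) with |a_k| ≤ 2C for all k. -/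
theorem stmt_13 (β : ℂ) (hβ : 1 < ‖β‖) (n : ℕ) (hn : 0 < n)
    (i j : ℕ) (hij : j < i) (m : ℕ) (hm : m < 2 * (i - j)) (C : ℤ)
    (d : ℕ → ℤ) (hd : ∀ k ≤ m, |d k| ≤ C)
    (heq : β ^ i - β ^ j = (n : ℂ) * ∑ k ∈ Finset.range (m + 1), (d k : ℂ) * β ^ k) :
    ∃ (L : ℤ) (a : ℤ → ℤ), (∀ k : ℤ, k < -L → a k = 0) ∧ (∀ k, |a k| ≤ 2 * C) ∧
      (∃ (N : ℤ) (p : ℕ), 0 < p ∧ ∀ k : ℤ, N ≤ k → a (k + p) = a k) ∧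
      (1 : ℂ) / n = ∑' k : ℤ, (a k : ℂ) * β ^ (-k) := by
  classical
  have hβ0 : β ≠ 0 := fun h => by simp [h] at hβ; linarith
  set q : ℕ := i - j with hqdef
  have hq : 0 < q := by omega
  have hi : i = j + q := by omega
  have hm' : m < 2 * q := hm
  have hC0 : 0 ≤ C := le_trans (abs_nonneg _) (hd 0 (Nat.zero_le m))
  refine ⟨(m : ℤ),
    fun K => ∑ k ∈ Finset.range (m + 1),
      if ((q:ℤ) ∣ (K + k - j) ∧ (q:ℤ) ≤ K + k - j) then d k else 0, ?_, ?_, ?_, ?_⟩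
  · -- vanishing
    intro K hK
    apply Finset.sum_eq_zero
    intro k hk
    rw [Finset.mem_range] at hk
    rw [if_neg]
    rintro ⟨-, h2⟩
    omega
  · -- bound
    intro K
    show |∑ k ∈ Finset.range (m + 1),
      if ((q:ℤ) ∣ (K + k - j) ∧ (q:ℤ) ≤ K + k - j) then d k else 0| ≤ 2 * C
    rw [← Finset.sum_filter]
    set S := (Finset.range (m + 1)).filter
      (fun k : ℕ => (q:ℤ) ∣ (K + (k:ℤ) - j) ∧ (q:ℤ) ≤ K + (k:ℤ) - j) with hS
    have hq' : (0:ℤ) < q := by exact_mod_cast hq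
    have hm2 : (m:ℤ) < 2 * q := by exact_mod_cast hm'
    have hcard : S.card ≤ 2 := by
      set r : ℤ := ((j:ℤ) - K) % q with hr
      have hr0 : 0 ≤ r := Int.emod_nonneg _ (by exact_mod_cast hq.ne')
      have hr1 : r < q := Int.emod_lt_of_pos _ hq'
      have hsub : S ⊆ ({r.toNat, r.toNat + q} : Finset ℕ) := by
        intro k hk
        simp only [hS, Finset.mem_filter, Finset.mem_range] at hk
        obtain ⟨hkm, ⟨c, hc⟩, -⟩ := hk
        have hdm : (q:ℤ) * (((j:ℤ) - K) / q) + ((j:ℤ) - K) % q = (j:ℤ) - K :=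
          Int.mul_ediv_add_emod _ _
        set s : ℤ := ((j:ℤ) - K) / q with hs
        have hexp : (q:ℤ) * (c + s) = q * c + q * s := by ring
        have hks : (k:ℤ) = (q:ℤ) * (c + s) + r := by linarith
        have hk0 : (0:ℤ) ≤ k := Int.natCast_nonneg k
        have hkm' : (k:ℤ) ≤ m := by exact_mod_cast Nat.lt_succ_iff.mp hkm
        have ht0 : 0 ≤ c + s := by
          by_contra h
          push_neg at h
          have h1 : c + s ≤ -1 := by omega
          have h2 : (q:ℤ) * (c + s) ≤ (q:ℤ) * (-1) :=
            mul_le_mul_of_nonneg_left h1 (le_of_lt hq')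
          linarith
        have ht2 : c + s < 2 := by
          by_contra h
          push_neg at h
          have h2 : (q:ℤ) * 2 ≤ (q:ℤ) * (c + s) :=
            mul_le_mul_of_nonneg_left h (le_of_lt hq')
          linarith
        have hcase : c + s = 0 ∨ c + s = 1 := by omega
        simp only [Finset.mem_insert, Finset.mem_singleton]
        rcases hcase with h | h <;> rw [h] at hks
        · left
          have : (k:ℤ) = r := by linarith [hks]
          omega
        · right
          have : (k:ℤ) = q + r := by
            have : (q:ℤ) * 1 = q := by ring
            linarith [hks]
          omega
      calc S.card ≤ ({r.toNat, r.toNat + q} : Finset ℕ).card := Finset.card_le_card hsub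
        _ ≤ 2 := (Finset.card_insert_le _ _).trans (by simp)
    calc |∑ k ∈ S, d k| ≤ ∑ k ∈ S, |d k| := Finset.abs_sum_le_sum_abs _ _
      _ ≤ ∑ k ∈ S, C := Finset.sum_le_sum (fun k hk => by
          refine hd k ?_
          simp only [hS, Finset.mem_filter, Finset.mem_range] at hk
          omega)
      _ = S.card • C := Finset.sum_const C
      _ ≤ 2 * C := by
          rw [nsmul_eq_mul]
          exact mul_le_mul_of_nonneg_right (by exact_mod_cast hcard) hC0
  · -- periodicity
    refine ⟨(j:ℤ) + 1, q, hq, ?_⟩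
    intro K hK
    apply Finset.sum_congr rfl
    intro k hk
    rw [Finset.mem_range] at hk
    apply if_congr _ rfl rfl
    have e1 : K + (q:ℤ) + k - j = (K + k - j) + q := by ring
    have hdvd : ((q:ℤ) ∣ K + (q:ℤ) + k - j) ↔ ((q:ℤ) ∣ K + k - j) := by
      rw [e1]
      exact dvd_add_left (dvd_refl _)
    constructor
    · rintro ⟨h1, -⟩
      have h1' := hdvd.mp h1
      refine ⟨h1', ?_⟩
      exact Int.le_of_dvd (by omega) h1'
    · rintro ⟨h1, h2⟩
      exact ⟨hdvd.mpr h1, by omega⟩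
  · -- the sum
    have hq' : (0:ℤ) < q := by exact_mod_cast hq
    set z : ℂ := ∑ k ∈ Finset.range (m + 1), (d k : ℂ) * β ^ k with hz
    set w : ℂ := β ^ (-(q:ℤ)) with hwdef
    have hw : ‖w‖ < 1 := by
      have h1 : ‖w‖ = (‖β‖) ^ (-(q:ℤ)) := by
        rw [hwdef]; exact norm_zpow β _
      rw [h1, zpow_neg, zpow_natCast]
      have h2 : 1 < ‖β‖ ^ q := one_lt_pow₀ hβ hq.ne'
      exact inv_lt_one_of_one_lt₀ h2
    set g : ℕ → ℤ → ℂ := fun k K =>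
      if ((q:ℤ) ∣ (K + k - j) ∧ (q:ℤ) ≤ K + k - j) then (d k : ℂ) * β ^ (-K) else 0
      with hg
    have key : ∀ k ∈ Finset.range (m + 1), Summable (g k) ∧
        ∑' K : ℤ, g k K = ((d k : ℂ) * β ^ ((k:ℤ) - j - q)) * (1 - w)⁻¹ := by
      intro k hk
      set e : ℕ → ℤ := fun t => (j:ℤ) - k + ((t:ℤ) + 1) * q with he
      have hinj : Function.Injective e := by
        intro t1 t2 h
        simp only [he] at h
        have h2 : ((t1:ℤ) + 1) * q = ((t2:ℤ) + 1) * q := by linarith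
        have h3 := mul_right_cancel₀ (by exact_mod_cast hq.ne' : (q:ℤ) ≠ 0) h2
        omega
      have hval : ∀ t : ℕ, e t + k - j = ((t:ℤ) + 1) * q := by
        intro t; simp only [he]; ring
      have hcomp : ∀ t : ℕ, g k (e t) = ((d k : ℂ) * β ^ ((k:ℤ) - j - q)) * w ^ t := by
        intro t
        have hc1 : (q:ℤ) ∣ e t + k - j := by rw [hval]; exact dvd_mul_left _ _
        have hc2 : (q:ℤ) ≤ e t + k - j := by
          rw [hval]
          have h5 : (1:ℤ) * q ≤ ((t:ℤ) + 1) * q :=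
            mul_le_mul_of_nonneg_right (by omega) (le_of_lt hq')
          linarith
        simp only [hg]
        rw [if_pos ⟨hc1, hc2⟩]
        have hexp : -(e t) = ((k:ℤ) - j - q) + (-(q:ℤ)) * (t:ℤ) := by
          simp only [he]; ring
        rw [hexp, zpow_add₀ hβ0, zpow_mul, zpow_natCast, mul_assoc]
      have hsupp : ∀ K : ℤ, K ∉ Set.range e → g k K = 0 := by
        intro K hK
        simp only [hg]
        rw [if_neg]
        rintro ⟨⟨c, hc⟩, hle⟩
        apply hK
        have hc1 : 1 ≤ c := by
          by_contra h
          push_neg at h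
          have h0 : c ≤ 0 := by omega
          have h2 : (q:ℤ) * c ≤ (q:ℤ) * 0 :=
            mul_le_mul_of_nonneg_left h0 (le_of_lt hq')
          rw [hc] at hle
          linarith
        refine ⟨(c - 1).toNat, ?_⟩
        simp only [he]
        have hcn : (((c - 1).toNat : ℕ) : ℤ) = c - 1 := Int.toNat_of_nonneg (by omega)
        rw [hcn]
        linarith [hc]
      have hge : Summable (fun t : ℕ => g k (e t)) := by
        rw [funext hcomp]
        exact (summable_geometric_of_norm_lt_one hw).mul_left _
      have hsum : Summable (g k) :=
        (Function.Injective.summable_iff hinj hsupp).mp hge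
      refine ⟨hsum, ?_⟩
      have ht1 : ∑' t : ℕ, g k (e t) = ∑' K : ℤ, g k K :=
        Function.Injective.tsum_eq hinj (by
          intro K hK
          by_contra hr
          exact hK (hsupp K hr))
      rw [← ht1, funext hcomp, tsum_mul_left, tsum_geometric_of_norm_lt_one hw]
    have hF : ∀ K : ℤ, ((∑ k ∈ Finset.range (m + 1),
        if ((q:ℤ) ∣ (K + k - j) ∧ (q:ℤ) ≤ K + k - j) then d k else 0 : ℤ) : ℂ) * β ^ (-K)
        = ∑ k ∈ Finset.range (m + 1), g k K := by
      intro K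
      rw [Int.cast_sum, Finset.sum_mul]
      refine Finset.sum_congr rfl fun k hk => ?_
      simp only [hg]
      split_ifs with h
      · rfl
      · simp
    have hmain : ∑' K : ℤ, ((∑ k ∈ Finset.range (m + 1),
        if ((q:ℤ) ∣ (K + k - j) ∧ (q:ℤ) ≤ K + k - j) then d k else 0 : ℤ) : ℂ) * β ^ (-K)
        = z * β ^ (-(j:ℤ) - q) * (1 - w)⁻¹ := by
      rw [funext hF, Summable.tsum_finsetSum (fun k hk => (key k hk).1)]
      rw [Finset.sum_congr rfl (fun k hk => (key k hk).2)]
      rw [hz, Finset.sum_mul, Finset.sum_mul]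
      refine Finset.sum_congr rfl fun k hk => ?_
      have : ((k:ℤ) - j - q) = (k:ℤ) + (-(j:ℤ) - q) := by ring
      rw [this, zpow_add₀ hβ0, zpow_natCast]
      ring
    show (1:ℂ) / n = ∑' K : ℤ, ((∑ k ∈ Finset.range (m + 1),
        if ((q:ℤ) ∣ (K + k - j) ∧ (q:ℤ) ≤ K + k - j) then d k else 0 : ℤ) : ℂ) * β ^ (-K)
    rw [hmain]
    have hn0 : (n:ℂ) ≠ 0 := Nat.cast_ne_zero.mpr hn.ne'
    have h1w : (1:ℂ) - w ≠ 0 := by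
      intro h
      have : w = 1 := by linear_combination -h
      rw [this] at hw
      simp at hw
    have hq0 : β ^ q ≠ 0 := pow_ne_zero _ hβ0
    have hbjq : β ^ (-(j:ℤ) - q) = (β ^ (j + q) : ℂ)⁻¹ := by
      rw [show -(j:ℤ) - q = -(((j + q : ℕ)):ℤ) by push_cast; ring, zpow_neg, zpow_natCast]
    have hwq : w = (β ^ q : ℂ)⁻¹ := by rw [hwdef, zpow_neg, zpow_natCast]
    rw [hbjq, hwq]
    rw [hi] at heq
    have hzval : (n:ℂ) * z = β ^ (j + q) - β ^ j := heq.symm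
    have hq1 : (β:ℂ) ^ q - 1 ≠ 0 := by
      intro h
      apply h1w
      rw [hwq]
      have h2 : β ^ q = 1 := by linear_combination h
      rw [h2]
      simp
    field_simp
    linear_combination (-(β:ℂ) ^ q) * hzval
end

section
/- Let β be an algebraic number such that for some i > j, β^i - β^j ∈ nℤ[β] holds for n = n₁ and (with possibly different exponents) for n = n₂, where gcd(n₁, n₂) = 1. Then there exist i' > j' with β^{i'} - β^{j'} ∈ n₁n₂ℤ[β]. -/
open Finset

lemma aux17 (β : ℂ) (hβ0 : β ≠ 0) (n : ℕ) (i j : ℤ) (hji : j < i)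
    (z : ℂ) (hz : z ∈ Algebra.adjoin ℤ {β}) (he : β ^ i - β ^ j = (n : ℂ) * z) (m : ℕ) :
    ∃ w ∈ Algebra.adjoin ℤ {β},
      β ^ j * (β ^ ((i - j).toNat * m) - 1) = (n : ℂ) * w := by
  set c := (i - j).toNat with hc
  have hβR : β ∈ Algebra.adjoin ℤ {β} := Algebra.self_mem_adjoin_singleton ℤ β
  refine ⟨z * ∑ k ∈ range m, (β ^ c) ^ k, ?_, ?_⟩
  · exact mul_mem hz (Subalgebra.sum_mem _ fun k _ => pow_mem (pow_mem hβR c) k)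
  · have hcd : (c : ℤ) = i - j := Int.toNat_of_nonneg (by omega)
    have h1 : β ^ j * (β : ℂ) ^ c = β ^ i := by
      rw [← zpow_natCast β c, hcd, ← zpow_add₀ hβ0]
      congr 1; ring
    calc β ^ j * (β ^ (c * m) - 1)
        = β ^ j * ((∑ k ∈ range m, (β ^ c) ^ k) * (β ^ c - 1)) := by
          rw [pow_mul, geom_sum_mul]
      _ = (β ^ j * β ^ c - β ^ j) * ∑ k ∈ range m, (β ^ c) ^ k := by ring
      _ = ((n : ℂ) * z) * ∑ k ∈ range m, (β ^ c) ^ k := by rw [h1, he]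
      _ = _ := by ring

theorem stmt_17 (β : ℂ) (hβ0 : β ≠ 0) (hβ : IsAlgebraic ℚ β) (n₁ n₂ : ℕ)
    (hn₁ : 0 < n₁) (hn₂ : 0 < n₂) (hcop : Nat.Coprime n₁ n₂)
    (h₁ : ∃ i j : ℤ, j < i ∧ ∃ z ∈ Algebra.adjoin ℤ {β}, β ^ i - β ^ j = (n₁ : ℂ) * z)
    (h₂ : ∃ i j : ℤ, j < i ∧ ∃ z ∈ Algebra.adjoin ℤ {β}, β ^ i - β ^ j = (n₂ : ℂ) * z) :
    ∃ i' j' : ℤ, j' < i' ∧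
      ∃ z ∈ Algebra.adjoin ℤ {β}, β ^ i' - β ^ j' = ((n₁ : ℂ) * n₂) * z := by
  obtain ⟨i₁, j₁, h₁lt, z₁, hz₁, he₁⟩ := h₁
  obtain ⟨i₂, j₂, h₂lt, z₂, hz₂, he₂⟩ := h₂
  have hβR : β ∈ Algebra.adjoin ℤ {β} := Algebra.self_mem_adjoin_singleton ℤ β
  set c₁ := (i₁ - j₁).toNat with hc₁
  set c₂ := (i₂ - j₂).toNat with hc₂
  obtain ⟨w₁, hw₁, heq₁⟩ := aux17 β hβ0 n₁ i₁ j₁ h₁lt z₁ hz₁ he₁ c₂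
  obtain ⟨w₂, hw₂, heq₂⟩ := aux17 β hβ0 n₂ i₂ j₂ h₂lt z₂ hz₂ he₂ c₁
  set D := c₁ * c₂ with hD
  have hDpos : 0 < D := by
    have : 0 < c₁ := by omega
    have : 0 < c₂ := by omega
    positivity
  have heq₂' : β ^ j₂ * (β ^ D - 1) = (n₂ : ℂ) * w₂ := by
    rw [show D = (i₂ - j₂).toNat * c₁ from by rw [hD, hc₂]; ring]; exact heq₂
  set j := max j₁ j₂ with hj
  -- split β^j over β^{j₁} and β^{j₂}
  have split : ∀ j' : ℤ, j' ≤ j → (β : ℂ) ^ j = β ^ ((j - j').toNat) * β ^ j' := by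
    intro j' hj'
    rw [← zpow_natCast β (j - j').toNat, Int.toNat_of_nonneg (by omega), ← zpow_add₀ hβ0]
    congr 1; ring
  have hx1 : β ^ j * ((β : ℂ) ^ D - 1)
      = (n₁ : ℂ) * (β ^ ((j - j₁).toNat) * w₁) := by
    rw [split j₁ (le_max_left _ _)]
    calc β ^ ((j - j₁).toNat) * β ^ j₁ * ((β:ℂ) ^ D - 1)
        = β ^ ((j - j₁).toNat) * (β ^ j₁ * ((β:ℂ) ^ D - 1)) := by ring
      _ = β ^ ((j - j₁).toNat) * ((n₁ : ℂ) * w₁) := by rw [heq₁]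
      _ = _ := by ring
  have hx2 : β ^ j * ((β : ℂ) ^ D - 1)
      = (n₂ : ℂ) * (β ^ ((j - j₂).toNat) * w₂) := by
    rw [split j₂ (le_max_right _ _)]
    calc β ^ ((j - j₂).toNat) * β ^ j₂ * ((β:ℂ) ^ D - 1)
        = β ^ ((j - j₂).toNat) * (β ^ j₂ * ((β:ℂ) ^ D - 1)) := by ring
      _ = β ^ ((j - j₂).toNat) * ((n₂ : ℂ) * w₂) := by rw [heq₂']
      _ = _ := by ring
  obtain ⟨a, b, hab⟩ := (Nat.isCoprime_iff_coprime.mpr hcop)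
  have hcast : (a : ℂ) * n₁ + (b : ℂ) * n₂ = 1 := by
    have := congrArg (fun t : ℤ => (t : ℂ)) hab
    push_cast at this
    simpa using this
  refine ⟨j + D, j, by omega,
    (a : ℂ) * (β ^ ((j - j₂).toNat) * w₂) + (b : ℂ) * (β ^ ((j - j₁).toNat) * w₁), ?_, ?_⟩
  · have ha : (a : ℂ) ∈ Algebra.adjoin ℤ {β} := intCast_mem _ a
    have hb : (b : ℂ) ∈ Algebra.adjoin ℤ {β} := intCast_mem _ b
    exact add_mem (mul_mem ha (mul_mem (pow_mem hβR _) hw₂))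
      (mul_mem hb (mul_mem (pow_mem hβR _) hw₁))
  · have hzpow : (β : ℂ) ^ (j + (D : ℤ)) - β ^ j = β ^ j * ((β : ℂ) ^ D - 1) := by
      rw [zpow_add₀ hβ0, zpow_natCast]; ring
    rw [hzpow]
    calc β ^ j * ((β : ℂ) ^ D - 1)
        = ((a : ℂ) * n₁ + (b : ℂ) * n₂) * (β ^ j * ((β : ℂ) ^ D - 1)) := by
          rw [hcast, one_mul]
      _ = (a : ℂ) * n₁ * (β ^ j * ((β:ℂ) ^ D - 1))
          + (b : ℂ) * n₂ * (β ^ j * ((β:ℂ) ^ D - 1)) := by ring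
      _ = (a : ℂ) * n₁ * ((n₂ : ℂ) * (β ^ ((j - j₂).toNat) * w₂))
          + (b : ℂ) * n₂ * ((n₁ : ℂ) * (β ^ ((j - j₁).toNat) * w₁)) := by nth_rewrite 1 [hx2]; rw [hx1]
      _ = _ := by ring
end

section
/- Let β be an algebraic number whose minimal polynomial over ℤ has leading coefficient c divisible by a prime power p^ℓ, and write m_k(x) for the minimal polynomial of β^k with leading coefficient c_k. Suppose k is such that p^ℓ divides c_k, and suppose every root γ of the polynomial m_k(x) - c_k x^{deg m_k} of degree less than deg m_k satisfies: there exist i > j and q(x) ∈ ℤ[x] with x^i - x^j - p^ℓ q(x) divisible by the minimal polynomial of γ. Then there exist I > J with β^I - β^J ∈ p^ℓ ℤ[β^k] ⊆ p^ℓ ℤ[β]. -/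
open Polynomial

lemma geom_aux (N : ℕ) (y : Polynomial ℤ) :
    ∃ T : Polynomial ℤ, y ^ N - 1 = (y - 1) ^ 2 * T + C (N : ℤ) * (y - 1) := by
  have h1 : (y - 1) ∣ (∑ i ∈ Finset.range N, y ^ i) - C (N : ℤ) := by
    have h2 : (∑ i ∈ Finset.range N, y ^ i) - C (N : ℤ) =
        ∑ i ∈ Finset.range N, (y ^ i - 1) := by
      rw [Finset.sum_sub_distrib]
      simp [mul_comm]
    rw [h2]
    refine Finset.dvd_sum fun i _ => ?_
    simpa using sub_dvd_pow_sub_pow y 1 i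
  obtain ⟨T, hT⟩ := h1
  refine ⟨T, ?_⟩
  have hg := geom_sum_mul y N
  linear_combination (y - 1) * hT - hg

-- shift lemma
lemma shift_lemma (n : ℤ) (g : Polynomial ℤ) (j u : ℕ) (q : Polynomial ℤ)
    (h : g ∣ X ^ (j + u) - X ^ j - C n * q) (m : ℕ) :
    ∃ q' : Polynomial ℤ, g ∣ X ^ (j + u * m) - X ^ j - C n * q' := by
  obtain ⟨G, hG⟩ : ((X : Polynomial ℤ) ^ u - 1) ∣ (X ^ (u * m) - 1) := by
    rw [pow_mul]
    simpa using sub_dvd_pow_sub_pow ((X : Polynomial ℤ) ^ u) 1 m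
  obtain ⟨h₁, hh₁⟩ := h
  exact ⟨G * q, ⟨G * h₁, by linear_combination G * hh₁ + X ^ j * hG⟩⟩

-- combine lemma
lemma combine_lemma (n : ℤ) (N : ℕ) (hN : (N : ℤ) = n) (hN1 : 1 ≤ N)
    (f g : Polynomial ℤ) (j₁ u₁ j₂ u₂ : ℕ) (q₁ q₂ : Polynomial ℤ)
    (hu₁ : 1 ≤ u₁) (hu₂ : 1 ≤ u₂)
    (h₁ : f ∣ X ^ (j₁ + u₁) - X ^ j₁ - C n * q₁)
    (h₂ : g ∣ X ^ (j₂ + u₂) - X ^ j₂ - C n * q₂) :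
    ∃ (j u : ℕ) (q : Polynomial ℤ), 1 ≤ u ∧
      f * g ∣ X ^ (j + u) - X ^ j - C n * q := by
  obtain ⟨q₁', h₁'⟩ := shift_lemma n f j₁ u₁ q₁ h₁ u₂
  obtain ⟨q₂', h₂'⟩ := shift_lemma n g j₂ u₂ q₂ h₂ u₁
  rw [mul_comm u₂ u₁] at h₂'
  set U := u₁ * u₂ with hU
  obtain ⟨c₁, e₁⟩ := h₁'
  obtain ⟨c₂, e₂⟩ := h₂'
  obtain ⟨T, hT⟩ := geom_aux N ((X : Polynomial ℤ) ^ U)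
  rw [hN] at hT
  refine ⟨j₁ + j₂, U * N,
    (q₁' * (X ^ (j₂ + U) - X ^ j₂) + q₂' * (X ^ (j₁ + U) - X ^ j₁)
      - C n * (q₁' * q₂')) * T + X ^ (j₁ + j₂) * (X ^ U - 1),
    Nat.one_le_iff_ne_zero.mpr (by positivity), ⟨c₁ * c₂ * T, ?_⟩⟩
  have eprod : (X ^ (j₁ + U) - X ^ j₁ - C n * q₁') *
      (X ^ (j₂ + U) - X ^ j₂ - C n * q₂') = f * g * (c₁ * c₂) := by
    rw [e₁, e₂]; ring
  linear_combination (X : Polynomial ℤ) ^ (j₁ + j₂) * hT + T * eprod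



-- every irreducible nonconstant integer polynomial that annihilates γ is divisible by
-- (associated to) the minimal polynomial data, hence divides the same targets
lemma irred_dvd_target (f : Polynomial ℤ) (hfirr : Irreducible f) (hfprim : f.IsPrimitive)
    (hfdeg : 1 ≤ f.natDegree) (γ : ℂ) (hγf : Polynomial.aeval γ f = 0)
    (mγ T : Polynomial ℤ) (hmγ : IsMinPolyZ γ mγ) (hdvd : mγ ∣ T) : f ∣ T := by
  by_cases hT : T = 0
  · simp [hT]
  have hf0 : f ≠ 0 := hfirr.ne_zero
  have hinj : Function.Injective (algebraMap ℤ ℚ) := fun a b h => by exact_mod_cast h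
  have hmapf0 : f.map (algebraMap ℤ ℚ) ≠ 0 := by
    simpa using (Polynomial.map_ne_zero_iff hinj).mpr hf0
  have hγalg : IsIntegral ℚ γ := by
    rw [← isAlgebraic_iff_isIntegral]
    refine ⟨mγ.map (algebraMap ℤ ℚ), ?_, ?_⟩
    · exact (Polynomial.map_ne_zero_iff hinj).mpr hmγ.1
    · rw [aeval_map_algebraMap]; exact hmγ.2.2.2.1
  set μ := minpoly ℚ γ with hμ
  have hμf : μ ∣ f.map (algebraMap ℤ ℚ) := by
    apply minpoly.dvd
    rw [aeval_map_algebraMap]; exact hγf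
  have hμm : μ ∣ mγ.map (algebraMap ℤ ℚ) := by
    apply minpoly.dvd
    rw [aeval_map_algebraMap]; exact hmγ.2.2.2.1
  have firr' : Irreducible (f.map (Int.castRingHom ℚ)) :=
    (Polynomial.IsPrimitive.Int.irreducible_iff_irreducible_map_cast hfprim).mp hfirr
  have hμnu : ¬ IsUnit μ := by
    intro hu
    have h1 := Polynomial.natDegree_eq_zero_of_isUnit hu
    have h2 := minpoly.natDegree_pos hγalg
    rw [hμ] at h1
    omega
  -- f.map ∣ μ
  obtain ⟨w, hw⟩ := hμf
  have hwu : IsUnit w := by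
    rcases firr'.isUnit_or_isUnit (by exact_mod_cast hw) with h | h
    · exact absurd h hμnu
    · exact h
  have hfμ : f.map (algebraMap ℤ ℚ) ∣ μ := by
    have : Associated μ (f.map (algebraMap ℤ ℚ)) := by
      obtain ⟨wu, rfl⟩ := hwu
      exact ⟨wu, hw.symm⟩
    exact this.symm.dvd
  have hfT : f.map (algebraMap ℤ ℚ) ∣ T.map (algebraMap ℤ ℚ) :=
    hfμ.trans (hμm.trans (Polynomial.map_dvd _ hdvd))
  -- transfer to ℤ via primitive part
  have hc0 : T.content ≠ 0 := by
    simpa [Polynomial.content_eq_zero_iff] using hT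
  have hCunit : IsUnit (C ((T.content : ℤ) : ℚ)) := by
    rw [Polynomial.isUnit_C]
    exact isUnit_iff_ne_zero.mpr (by exact_mod_cast hc0)
  have hfTP : f.map (algebraMap ℤ ℚ) ∣ T.primPart.map (algebraMap ℤ ℚ) := by
    have h1 : T.map (algebraMap ℤ ℚ) =
        C ((T.content : ℤ) : ℚ) * T.primPart.map (algebraMap ℤ ℚ) := by
      conv_lhs => rw [T.eq_C_content_mul_primPart]
      rw [Polynomial.map_mul, Polynomial.map_C]
      rfl
    rw [h1] at hfT
    exact (IsUnit.dvd_mul_left hCunit).mp hfT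
  have : f ∣ T.primPart :=
    hfprim.dvd_of_fraction_map_dvd_fraction_map hfTP
  exact this.trans T.primPart_dvd

lemma main_ind (p : ℕ) (hp : p.Prime) (ℓ : ℕ) (hℓ : 1 ≤ ℓ) (r : Polynomial ℤ) (hr0 : r ≠ 0)
    (hroots : ∀ γ : ℂ, Polynomial.aeval γ r = 0 →
      ∃ (i j : ℕ) (q mγ : Polynomial ℤ), j < i ∧ IsMinPolyZ γ mγ ∧
        mγ ∣ X ^ i - X ^ j - C ((p : ℤ) ^ ℓ) * q) :
    ∀ (N : ℕ) (g : Polynomial ℤ), g.natDegree ≤ N → g.IsPrimitive → g ∣ r →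
      ∃ (j u : ℕ) (q : Polynomial ℤ), 1 ≤ u ∧
        g ∣ X ^ (j + u) - X ^ j - C ((p : ℤ) ^ ℓ) * q := by
  have hNcast : ((p ^ ℓ : ℕ) : ℤ) = (p : ℤ) ^ ℓ := by push_cast; ring
  have hN1 : 1 ≤ p ^ ℓ := Nat.one_le_pow _ _ hp.pos
  intro N
  induction N with
  | zero =>
    intro g hdeg hprim _
    have hu : IsUnit g := by
      obtain ⟨a, ha⟩ := Polynomial.natDegree_eq_zero.mp (Nat.le_zero.mp hdeg)
      have : IsUnit a := hprim a (by rw [ha])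
      rw [← ha, Polynomial.isUnit_C]
      exact this
    exact ⟨0, 1, 0, le_refl 1, hu.dvd⟩
  | succ N IH =>
    intro g hdeg hprim hgr
    by_cases hu : IsUnit g
    · exact ⟨0, 1, 0, le_refl 1, hu.dvd⟩
    have hg0 : g ≠ 0 := by
      rintro rfl
      exact hr0 (zero_dvd_iff.mp hgr)
    obtain ⟨f, hfirr, hfdvd⟩ := WfDvdMonoid.exists_irreducible_factor hu hg0
    obtain ⟨g', rfl⟩ := hfdvd
    have hf0 : f ≠ 0 := hfirr.ne_zero
    have hg'0 : g' ≠ 0 := right_ne_zero_of_mul hg0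
    have hfprim : f.IsPrimitive := fun a ha => hprim a (ha.trans (Dvd.intro _ rfl))
    have hfdeg : 1 ≤ f.natDegree := by
      by_contra h
      have hfd0 : f.natDegree = 0 := by omega
      obtain ⟨a, ha⟩ := Polynomial.natDegree_eq_zero.mp hfd0
      exact hfirr.not_isUnit (by rw [← ha, Polynomial.isUnit_C]; exact hfprim a (by rw [ha]))
    have hdegmul : g'.natDegree ≤ N := by
      have := Polynomial.natDegree_mul hf0 hg'0
      omega
    have hg'prim : g'.IsPrimitive := fun a ha =>
      hprim a (ha.trans (Dvd.intro_left _ rfl))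
    have hg'r : g' ∣ r := (Dvd.intro_left f rfl).trans hgr
    obtain ⟨j₂, u₂, q₂, hu₂, hdvd₂⟩ := IH g' hdegmul hg'prim hg'r
    -- find a root of f
    have hmapdeg : 0 < (f.map (algebraMap ℤ ℂ)).degree := by
      rw [Polynomial.degree_map_eq_of_injective
        (by simpa [algebraMap_int_eq] using (Int.cast_injective (α := ℂ)))]
      exact Polynomial.natDegree_pos_iff_degree_pos.mp hfdeg
    obtain ⟨γ, hγ⟩ := Complex.exists_root hmapdeg
    have hγf : Polynomial.aeval γ f = 0 := by
      rw [Polynomial.aeval_def, ← Polynomial.eval_map]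
      exact hγ
    have hγr : Polynomial.aeval γ r = 0 := by
      obtain ⟨w, hw⟩ := ((Dvd.intro _ rfl : f ∣ f * g').trans hgr)
      rw [hw, map_mul, hγf, zero_mul]
    obtain ⟨i, j₁, q₁, mγ, hji, hmγ, hmγdvd⟩ := hroots γ hγr
    have hfT : f ∣ X ^ i - X ^ j₁ - C ((p : ℤ) ^ ℓ) * q₁ :=
      irred_dvd_target f hfirr hfprim hfdeg γ hγf mγ _ hmγ hmγdvd
    have hid : i = j₁ + (i - j₁) := by omega
    rw [hid] at hfT
    exact combine_lemma ((p : ℤ) ^ ℓ) (p ^ ℓ) hNcast hN1 f g' j₁ (i - j₁) j₂ u₂ q₁ q₂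
      (by omega) hu₂ hfT hdvd₂

theorem stmt_18 (β : ℂ) (p : ℕ) (hp : p.Prime) (ℓ : ℕ) (hℓ : 1 ≤ ℓ)
    (m : Polynomial ℤ) (hm : IsMinPolyZ β m) (hc : (p : ℤ) ^ ℓ ∣ m.leadingCoeff)
    (k : ℕ) (hk : 1 ≤ k) (mk : Polynomial ℤ) (hmk : IsMinPolyZ (β ^ k) mk)
    (hck : (p : ℤ) ^ ℓ ∣ mk.leadingCoeff)
    (hroots : ∀ γ : ℂ,
      Polynomial.aeval γ (mk - C mk.leadingCoeff * X ^ mk.natDegree) = 0 →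
      ∃ (i j : ℕ) (q mγ : Polynomial ℤ), j < i ∧ IsMinPolyZ γ mγ ∧
        mγ ∣ X ^ i - X ^ j - C ((p : ℤ) ^ ℓ) * q) :
    ∃ I J : ℕ, J < I ∧
      ∃ z ∈ Algebra.adjoin ℤ {β ^ k}, β ^ I - β ^ J = ((p : ℂ) ^ ℓ) * z := by
  set c : ℤ := mk.leadingCoeff with hcdef
  set d : ℕ := mk.natDegree with hddef
  set r : Polynomial ℤ := mk - C c * X ^ d with hrdef
  have pint : Prime (p : ℤ) := Nat.prime_iff_prime_int.mp hp
  have hpc : (p : ℤ) ∣ c := (dvd_pow_self (p : ℤ) (by omega)).trans hck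
  -- p does not divide all coefficients of r
  have hnotall : ¬ ∀ n : ℕ, (p : ℤ) ∣ r.coeff n := by
    intro h
    have hall : ∀ n : ℕ, (p : ℤ) ∣ mk.coeff n := by
      intro n
      by_cases hnd : n = d
      · subst hnd
        exact hpc
      · have := h n
        rwa [hrdef, Polynomial.coeff_sub, Polynomial.coeff_C_mul,
          Polynomial.coeff_X_pow, if_neg hnd, mul_zero, sub_zero] at this
    have : IsUnit ((p : ℤ)) := hmk.2.1 _ ((Polynomial.C_dvd_iff_dvd_coeff _ _).mpr hall)
    exact pint.not_unit this
  have hr0 : r ≠ 0 := by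
    intro h
    exact hnotall (fun n => by simp [h])
  have hcont : ¬ (p : ℤ) ∣ r.content := by
    intro h
    exact hnotall (fun n => h.trans (Polynomial.content_dvd_coeff n))
  have hcop : IsCoprime ((p : ℤ) ^ ℓ) r.content :=
    IsCoprime.pow_left ((pint.coprime_iff_not_dvd).mpr hcont)
  obtain ⟨a, b, hab⟩ := hcop
  -- apply the induction
  obtain ⟨j, u, q, hu1, hdvd⟩ := main_ind p hp ℓ hℓ r hr0 hroots r.primPart.natDegree
    r.primPart (le_refl _) r.isPrimitive_primPart r.primPart_dvd
  obtain ⟨H, hH⟩ := hdvd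
  have Heq2 : C r.content * (X ^ (j + u) - X ^ j - C ((p : ℤ) ^ ℓ) * q) = r * H := by
    rw [hH]
    conv_rhs => rw [r.eq_C_content_mul_primPart]
    ring
  -- evaluate at β ^ k
  have EV := congrArg (Polynomial.aeval (β ^ k)) Heq2
  simp only [map_mul, map_sub, map_pow, Polynomial.aeval_X, Polynomial.aeval_C,
    algebraMap_int_eq, eq_intCast, map_intCast] at EV
  have hRv : Polynomial.aeval (β ^ k) r = -((c : ℂ)) * ((β ^ k) : ℂ) ^ d := by
    rw [hrdef]
    simp only [map_sub, map_mul, map_pow, Polynomial.aeval_X, Polynomial.aeval_C,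
      algebraMap_int_eq, eq_intCast, map_intCast]
    rw [hmk.2.2.2.1]
    ring
  rw [hRv] at EV
  obtain ⟨c', hc'⟩ := hck
  have hc'C : ((c : ℂ)) = (p : ℂ) ^ ℓ * (c' : ℂ) := by exact_mod_cast congrArg (Int.cast (R := ℂ)) hc'
  have habC : (a : ℂ) * (p : ℂ) ^ ℓ + (b : ℂ) * (r.content : ℂ) = 1 := by
    exact_mod_cast congrArg (Int.cast (R := ℂ)) hab
  refine ⟨k * (j + u), k * j, ?_, Polynomial.aeval (β ^ k)
    (C a * (X ^ (j + u) - X ^ j) + C b * (C r.content * q - C c' * X ^ d * H)),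
    Polynomial.aeval_mem_adjoin_singleton ℤ _, ?_⟩
  · have h2 : k * (j + u) = k * j + k * u := by ring
    have h3 : 1 ≤ k * u := Nat.one_le_iff_ne_zero.mpr (by positivity)
    omega
  · rw [pow_mul, pow_mul]
    simp only [map_add, map_mul, map_sub, map_pow, Polynomial.aeval_X, Polynomial.aeval_C,
      algebraMap_int_eq, eq_intCast, map_intCast]
    push_cast at EV ⊢
    linear_combination (-((β ^ k) ^ (j + u) - (β ^ k) ^ j)) * habC + (b : ℂ) * EV
      - (b : ℂ) * (β ^ k) ^ d * (Polynomial.aeval (β ^ k) H) * hc'C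
end
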